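/- arXiv:2208.11049 — 4 statements merged into one kernel-verified Lean document; each statement's English description precedes it below -/
import Mathlib

section
/- Let G be a group, p a prime and m ≥ 1. Let ρ_m : G → GSp₄(ℤ/p^mℤ) and ψ : G → (ℤ/p^{m+1}ℤ)ˣ be group homomorphisms, and let ϱ : G → GSp₄(ℤ/p^{m+1}ℤ) be a function (not assumed multiplicative) whose reduction mod p^m equals ρ_m and with ν(ϱ(g)) = ψ(g) for all g ∈ G. Then for all g, h ∈ G the element ϱ(g)ϱ(h)ϱ(gh)⁻¹ equals 1 + p^m·c̃(g,h) for a unique c(g,h) ∈ sp₄(𝔽_p) (c̃(g,h) denoting any lift of c(g,h)), and the function c : G × G → sp₄(𝔽_p) satisfies the 2-cocycle identity ρ̄(g)·c(h,k)·ρ̄(g)⁻¹ − c(gh,k) + c(g,hk) − c(g,h) = 0 for all g, h, k ∈ G, where ρ̄ : G → GSp₄(𝔽_p) is the mod-p reduction of ρ_m. -/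
open Matrix

/-- The 4×4 matrix `J` given in 2×2 blocks by `[[0, I₂], [−I₂, 0]]`. -/
def Jmat (R : Type*) [CommRing R] : Matrix (Fin 4) (Fin 4) R :=
  !![0, 0, 1, 0; 0, 0, 0, 1; -1, 0, 0, 0; 0, -1, 0, 0]

section Aux
variable (p m : ℕ) [hp : Fact p.Prime]

omit hp in
lemma aux_psucc : (p : ZMod (p ^ (m + 1))) ^ (m + 1) = 0 := by
  have := ZMod.natCast_self (p ^ (m + 1))
  push_cast at this
  exact this

lemma aux_congr (a b : ℤ) (h : (a : ZMod p) = b) :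
    (p : ZMod (p ^ (m + 1))) ^ m * a = (p : ZMod (p ^ (m + 1))) ^ m * b := by
  obtain ⟨t, ht⟩ := Int.ModEq.dvd ((ZMod.intCast_eq_intCast_iff a b p).1 h)
  have h2 : ((b : ZMod (p ^ (m + 1)))) - a = (p : ZMod (p ^ (m + 1))) * t := by
    have : ((b - a : ℤ) : ZMod (p ^ (m + 1))) = ((p * t : ℤ) : ZMod (p ^ (m + 1))) := by
      rw [ht]
    push_cast at this
    exact this
  have h3 := aux_psucc p m
  linear_combination (-(p : ZMod (p ^ (m + 1))) ^ m) * h2 - (t : ZMod (p ^ (m + 1))) * h3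

lemma aux_killed (r : ZMod (p ^ (m + 1))) (h : (p : ZMod (p ^ (m + 1))) ^ m * r = 0) :
    (r.val : ZMod p) = 0 := by
  haveI : NeZero (p ^ (m + 1)) := ⟨pow_ne_zero _ hp.out.ne_zero⟩
  have h1 : ((p ^ m * r.val : ℕ) : ZMod (p ^ (m + 1))) = 0 := by
    push_cast
    rw [ZMod.natCast_zmod_val]
    exact h
  obtain ⟨t, ht⟩ := (ZMod.natCast_eq_zero_iff _ _).1 h1
  have h3 : p ∣ r.val := by
    refine ⟨t, Nat.eq_of_mul_eq_mul_left (pow_pos hp.out.pos m) ?_⟩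
    rw [ht, pow_succ]
    ring
  exact (ZMod.natCast_eq_zero_iff _ _).2 h3

lemma aux_inj (x y : ZMod p)
    (h : (p : ZMod (p ^ (m + 1))) ^ m * ((x.val : ℕ) : ZMod (p ^ (m + 1)))
       = (p : ZMod (p ^ (m + 1))) ^ m * ((y.val : ℕ) : ZMod (p ^ (m + 1)))) : x = y := by
  haveI : NeZero p := ⟨hp.out.ne_zero⟩
  have h2 : ((p ^ m * x.val - p ^ m * y.val : ℤ) : ZMod (p ^ (m + 1))) = 0 := by
    push_cast
    linear_combination h
  obtain ⟨t, ht⟩ := by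
    have := (ZMod.intCast_zmod_eq_zero_iff_dvd _ _).1 h2
    push_cast at this
    exact this
  have hp0 : ((p : ℤ)) ^ m ≠ 0 := pow_ne_zero m (by exact_mod_cast hp.out.ne_zero)
  have h4 : ((x.val : ℤ) - y.val) = p * t := by
    apply mul_left_cancel₀ hp0
    rw [mul_sub]
    rw [show (p:ℤ)^m * ((p:ℤ) * t) = (p:ℤ)^(m+1) * t by ring]
    linarith [ht]
  have h5 : ((x.val : ℤ) : ZMod p) = ((y.val : ℤ) : ZMod p) :=
    (ZMod.intCast_eq_intCast_iff _ _ _).2 (Int.ModEq.symm (Int.modEq_iff_dvd.2 ⟨t, by linarith [h4]⟩))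
  push_cast at h5
  rwa [ZMod.natCast_zmod_val, ZMod.natCast_zmod_val] at h5

lemma aux_div (r : ZMod (p ^ (m + 1))) (hd : p ^ m ∣ r.val) :
    (p : ZMod (p ^ (m + 1))) ^ m * ((((r.val / p ^ m : ℕ) : ZMod p)).val : ZMod (p ^ (m + 1))) = r := by
  haveI : NeZero (p ^ (m + 1)) := ⟨pow_ne_zero _ hp.out.ne_zero⟩
  set a := r.val / p ^ m with ha
  rw [ZMod.val_natCast]
  have hmod : p ^ m * (a % p) ≡ p ^ m * a [MOD p ^ m * p] := Nat.ModEq.mul_left' (p ^ m) (Nat.mod_modEq a p)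
  rw [← pow_succ] at hmod
  have h2 := (ZMod.natCast_eq_natCast_iff _ _ _).2 hmod
  push_cast at h2
  rw [h2]
  rw [show ((p : ZMod (p ^ (m + 1))) ^ m * (a : ZMod (p ^ (m + 1)))) = ((p ^ m * a : ℕ) : ZMod (p ^ (m + 1))) by push_cast; ring]
  rw [ha, Nat.mul_div_cancel' hd, ZMod.natCast_zmod_val]
end Aux

section Aux2
variable (p m : ℕ) [hp : Fact p.Prime]

lemma aux_detJ (R : Type*) [CommRing R] : (Jmat R).det = 1 := by
  rw [Jmat, Matrix.det_succ_row_zero]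
  simp [Fin.sum_univ_succ, Matrix.det_succ_row_zero, Fin.succAbove]

lemma aux_mapJ {A B : Type*} [CommRing A] [CommRing B] (f : A →+* B) :
    (Jmat A).map f = Jmat B := by
  ext i j
  fin_cases i <;> fin_cases j <;> simp [Jmat, Matrix.vecHead, Matrix.vecTail]

omit hp in
lemma aux_q2 (hm : 1 ≤ m) :
    (p : ZMod (p ^ (m + 1))) ^ m * (p : ZMod (p ^ (m + 1))) ^ m = 0 := by
  have h1 : (p : ZMod (p ^ (m + 1))) ^ m * (p : ZMod (p ^ (m + 1))) ^ m
      = (p : ZMod (p ^ (m + 1))) ^ (m + 1) * (p : ZMod (p ^ (m + 1))) ^ (m - 1) := by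
    rw [← pow_add, ← pow_add]
    congr 1
    omega
  rw [h1, aux_psucc, zero_mul]

lemma aux_pi_dvd (hd : (p ^ m : ℕ) ∣ p ^ (m + 1)) (r : ZMod (p ^ (m + 1)))
    (h : ZMod.castHom hd (ZMod (p ^ m)) r = 0) : p ^ m ∣ r.val := by
  haveI : NeZero (p ^ (m + 1)) := ⟨pow_ne_zero _ hp.out.ne_zero⟩
  have h1 : ((r.val : ℕ) : ZMod (p ^ m)) = 0 := by
    rw [ZMod.natCast_val, ← ZMod.castHom_apply (h := hd), h]
  exact (ZMod.natCast_eq_zero_iff _ _).1 h1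

lemma aux_cast_val (hd : p ∣ p ^ (m + 1)) (r : ZMod (p ^ (m + 1))) :
    ZMod.castHom hd (ZMod p) r = (r.val : ZMod p) := by
  haveI : NeZero (p ^ (m + 1)) := ⟨pow_ne_zero _ hp.out.ne_zero⟩
  rw [ZMod.natCast_val, ZMod.castHom_apply]

lemma aux_iota_phi (hd : p ∣ p ^ (m + 1)) (x : ZMod p) :
    ZMod.castHom hd (ZMod p) ((x.val : ℕ) : ZMod (p ^ (m + 1))) = x := by
  haveI : NeZero p := ⟨hp.out.ne_zero⟩
  rw [map_natCast, ZMod.natCast_zmod_val]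
end Aux2

set_option maxHeartbeats 1000000 in
/-- Given a homomorphism `ρ_m : G → GSp₄(ℤ/p^mℤ)`, a homomorphism
`ψ : G → (ℤ/p^{m+1}ℤ)ˣ` and a set-theoretic lift `ϱ` of `ρ_m` with `ν ∘ ϱ = ψ`,
the element `ϱ(g)ϱ(h)ϱ(gh)⁻¹` equals `1 + p^m·c̃(g,h)` for a unique
`c(g,h) ∈ sp₄(𝔽_p)`, and `c` satisfies the 2-cocycle identity
`ρ̄(g)·c(h,k)·ρ̄(g)⁻¹ − c(gh,k) + c(g,hk) − c(g,h) = 0`. -/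
theorem obstruction_two_cocycle (p : ℕ) [Fact p.Prime] (m : ℕ) (hm : 1 ≤ m)
    (G : Type*) [Group G]
    (ρm : G → Matrix (Fin 4) (Fin 4) (ZMod (p ^ m)))
    (hρone : ρm 1 = 1)
    (hρmul : ∀ g h : G, ρm (g * h) = ρm g * ρm h)
    (ψ : G →* (ZMod (p ^ (m + 1)))ˣ)
    (ϱ : G → Matrix (Fin 4) (Fin 4) (ZMod (p ^ (m + 1))))
    (hred : ∀ g : G,
      (ϱ g).map (ZMod.castHom (pow_dvd_pow p (by omega : m ≤ m + 1)) (ZMod (p ^ m))) = ρm g)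
    (hν : ∀ g : G,
      (ϱ g)ᵀ * Jmat (ZMod (p ^ (m + 1))) * ϱ g
        = ((ψ g : (ZMod (p ^ (m + 1)))ˣ) : ZMod (p ^ (m + 1))) • Jmat (ZMod (p ^ (m + 1)))) :
    (∀ g h : G, ∃! C : Matrix (Fin 4) (Fin 4) (ZMod p),
      Cᵀ * Jmat (ZMod p) + Jmat (ZMod p) * C = 0 ∧
      ϱ g * ϱ h * (ϱ (g * h))⁻¹
        = 1 + ((p : ZMod (p ^ (m + 1))) ^ m) •
            C.map (fun x => (x.val : ZMod (p ^ (m + 1))))) ∧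
    (∀ c : G → G → Matrix (Fin 4) (Fin 4) (ZMod p),
      (∀ g h : G,
        (c g h)ᵀ * Jmat (ZMod p) + Jmat (ZMod p) * c g h = 0 ∧
        ϱ g * ϱ h * (ϱ (g * h))⁻¹
          = 1 + ((p : ZMod (p ^ (m + 1))) ^ m) •
              (c g h).map (fun x => (x.val : ZMod (p ^ (m + 1))))) →
      ∀ g h k : G,
        (ρm g).map (ZMod.castHom (dvd_pow_self p (by omega : m ≠ 0)) (ZMod p)) * c h k *
            ((ρm g).map (ZMod.castHom (dvd_pow_self p (by omega : m ≠ 0)) (ZMod p)))⁻¹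
          - c (g * h) k + c g (h * k) - c g h = 0) := by
  have hp : p.Prime := Fact.out
  haveI : NeZero p := ⟨hp.ne_zero⟩
  haveI : NeZero (p ^ (m + 1)) := ⟨pow_ne_zero _ hp.ne_zero⟩
  have hm0 : m ≠ 0 := by omega
  -- ring homs
  set π : ZMod (p ^ (m + 1)) →+* ZMod (p ^ m) :=
    ZMod.castHom (pow_dvd_pow p (Nat.le_succ m)) (ZMod (p ^ m)) with hπdef
  set φ : ZMod (p ^ (m + 1)) →+* ZMod p :=
    ZMod.castHom (dvd_pow_self p (Nat.succ_ne_zero m)) (ZMod p) with hφdef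
  set σ : ZMod (p ^ m) →+* ZMod p :=
    ZMod.castHom (dvd_pow_self p hm0) (ZMod p) with hσdef
  have hred' : ∀ g, (ϱ g).map ⇑π = ρm g := hred
  have hq2 : (p : ZMod (p ^ (m + 1))) ^ m * (p : ZMod (p ^ (m + 1))) ^ m = 0 := aux_q2 p m hm
  -- determinants are units
  have hunit : ∀ g, IsUnit (ϱ g).det := by
    intro g
    have h := congrArg Matrix.det (hν g)
    rw [Matrix.det_mul, Matrix.det_mul, Matrix.det_transpose, Matrix.det_smul,
      aux_detJ (ZMod (p ^ (m + 1)))] at h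
    simp only [mul_one, Fintype.card_fin] at h
    have : IsUnit ((ϱ g).det * (ϱ g).det) := by
      rw [h]
      exact ((ψ g).isUnit).pow 4
    exact isUnit_of_mul_isUnit_left this
  have hmulinv : ∀ g, ϱ g * (ϱ g)⁻¹ = 1 := fun g => Matrix.mul_nonsing_inv _ (hunit g)
  have hinvmul : ∀ g, (ϱ g)⁻¹ * ϱ g = 1 := fun g => Matrix.nonsing_inv_mul _ (hunit g)
  -- reduction mod p of ϱ
  have hφρ : ∀ g, (ϱ g).map ⇑φ = (ρm g).map ⇑σ := by
    intro g
    rw [← hred' g, Matrix.map_map]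
    have hcomp : ⇑σ ∘ ⇑π = ⇑φ := by
      rw [← RingHom.coe_comp]
      congr 1
      rw [hσdef, hπdef, hφdef, ZMod.castHom_comp]
    rw [hcomp]
  -- killing lemma for matrices
  have hphi : ∀ M : Matrix (Fin 4) (Fin 4) (ZMod (p ^ (m + 1))),
      ((p : ZMod (p ^ (m + 1))) ^ m) • M = 0 → M.map ⇑φ = 0 := by
    intro M hM
    ext i j
    have h1 : (p : ZMod (p ^ (m + 1))) ^ m * M i j = 0 := by
      have := congrFun (congrFun hM i) j
      simpa using this
    rw [Matrix.map_apply, Matrix.zero_apply, hφdef, aux_cast_val p m _ (M i j)]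
    exact aux_killed p m (M i j) h1
  -- the `sp4` condition, from a matrix identity
  have hsp : ∀ (E : Matrix (Fin 4) (Fin 4) (ZMod (p ^ (m + 1))))
      (C : Matrix (Fin 4) (Fin 4) (ZMod p)),
      Eᵀ * Jmat (ZMod (p ^ (m + 1))) * E = Jmat (ZMod (p ^ (m + 1))) →
      E = 1 + ((p : ZMod (p ^ (m + 1))) ^ m) • C.map (fun x => (x.val : ZMod (p ^ (m + 1)))) →
      Cᵀ * Jmat (ZMod p) + Jmat (ZMod p) * C = 0 := by
    intro E C hJJ hEC
    set q : ZMod (p ^ (m + 1)) := (p : ZMod (p ^ (m + 1))) ^ m with hqdef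
    set D : Matrix (Fin 4) (Fin 4) (ZMod (p ^ (m + 1))) :=
      C.map (fun x => (x.val : ZMod (p ^ (m + 1)))) with hDdef
    have hkey : q • (Dᵀ * Jmat (ZMod (p ^ (m + 1))) + Jmat (ZMod (p ^ (m + 1))) * D)
        = Eᵀ * Jmat (ZMod (p ^ (m + 1))) * E - Jmat (ZMod (p ^ (m + 1))) := by
      rw [hEC]
      simp only [Matrix.transpose_add, Matrix.transpose_smul, Matrix.transpose_one,
        add_mul, mul_add, one_mul, mul_one, smul_mul_assoc, mul_smul_comm, smul_smul,
        hq2, zero_smul, smul_add]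
      abel
    have hz : q • (Dᵀ * Jmat (ZMod (p ^ (m + 1))) + Jmat (ZMod (p ^ (m + 1))) * D) = 0 := by
      rw [hkey, hJJ, sub_self]
    have h0 := hphi _ hz
    have hDC : D.map ⇑φ = C := by
      ext i j
      rw [hDdef, Matrix.map_apply, Matrix.map_apply, hφdef]
      exact aux_iota_phi p m _ (C i j)
    calc Cᵀ * Jmat (ZMod p) + Jmat (ZMod p) * C
        = (Dᵀ * Jmat (ZMod (p ^ (m + 1))) + Jmat (ZMod (p ^ (m + 1))) * D).map ⇑φ := by
          rw [show (Dᵀ * Jmat (ZMod (p ^ (m + 1))) + Jmat (ZMod (p ^ (m + 1))) * D).map ⇑φ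
              = φ.mapMatrix (Dᵀ * Jmat (ZMod (p ^ (m + 1))) + Jmat (ZMod (p ^ (m + 1))) * D)
              from rfl]
          rw [map_add, _root_.map_mul, _root_.map_mul]
          simp only [RingHom.mapMatrix_apply]
          rw [Matrix.transpose_map, hDC, aux_mapJ φ]
      _ = 0 := h0
  -- ν of the error term
  have hJJ : ∀ g h : G,
      (ϱ g * ϱ h * (ϱ (g * h))⁻¹)ᵀ * Jmat (ZMod (p ^ (m + 1))) * (ϱ g * ϱ h * (ϱ (g * h))⁻¹)
        = Jmat (ZMod (p ^ (m + 1))) := by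
    intro g h
    have h1 : ((ϱ (g * h))⁻¹)ᵀ *
        (((ψ (g * h) : (ZMod (p ^ (m + 1)))ˣ) : ZMod (p ^ (m + 1))) • Jmat (ZMod (p ^ (m + 1))))
        * (ϱ (g * h))⁻¹ = Jmat (ZMod (p ^ (m + 1))) := by
      rw [← hν (g * h)]
      calc ((ϱ (g * h))⁻¹)ᵀ * ((ϱ (g * h))ᵀ * Jmat (ZMod (p ^ (m + 1))) * ϱ (g * h))
            * (ϱ (g * h))⁻¹
          = (ϱ (g * h) * (ϱ (g * h))⁻¹)ᵀ * Jmat (ZMod (p ^ (m + 1)))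
            * (ϱ (g * h) * (ϱ (g * h))⁻¹) := by
            rw [Matrix.transpose_mul]
            noncomm_ring
        _ = Jmat (ZMod (p ^ (m + 1))) := by
            rw [hmulinv (g * h), Matrix.transpose_one, one_mul, mul_one]
    have h2 : ((ϱ (g * h))⁻¹)ᵀ * Jmat (ZMod (p ^ (m + 1))) * (ϱ (g * h))⁻¹
        = (((ψ (g * h))⁻¹ : (ZMod (p ^ (m + 1)))ˣ) : ZMod (p ^ (m + 1)))
            • Jmat (ZMod (p ^ (m + 1))) := by
      have hv : (((ψ (g * h))⁻¹ : (ZMod (p ^ (m + 1)))ˣ) : ZMod (p ^ (m + 1)))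
          * ((ψ (g * h) : (ZMod (p ^ (m + 1)))ˣ) : ZMod (p ^ (m + 1))) = 1 := by
        rw [← Units.val_mul, inv_mul_cancel, Units.val_one]
      have h1' : ((ψ (g * h) : (ZMod (p ^ (m + 1)))ˣ) : ZMod (p ^ (m + 1)))
          • (((ϱ (g * h))⁻¹)ᵀ * Jmat (ZMod (p ^ (m + 1))) * (ϱ (g * h))⁻¹)
          = Jmat (ZMod (p ^ (m + 1))) := by
        rw [← smul_mul_assoc, ← mul_smul_comm]
        exact h1
      calc ((ϱ (g * h))⁻¹)ᵀ * Jmat (ZMod (p ^ (m + 1))) * (ϱ (g * h))⁻¹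
          = ((((ψ (g * h))⁻¹ : (ZMod (p ^ (m + 1)))ˣ) : ZMod (p ^ (m + 1)))
              * ((ψ (g * h) : (ZMod (p ^ (m + 1)))ˣ) : ZMod (p ^ (m + 1))))
              • (((ϱ (g * h))⁻¹)ᵀ * Jmat (ZMod (p ^ (m + 1))) * (ϱ (g * h))⁻¹) := by
            rw [hv, one_smul]
        _ = (((ψ (g * h))⁻¹ : (ZMod (p ^ (m + 1)))ˣ) : ZMod (p ^ (m + 1)))
              • (((ψ (g * h) : (ZMod (p ^ (m + 1)))ˣ) : ZMod (p ^ (m + 1)))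
                • (((ϱ (g * h))⁻¹)ᵀ * Jmat (ZMod (p ^ (m + 1))) * (ϱ (g * h))⁻¹)) := by
            rw [smul_smul]
        _ = (((ψ (g * h))⁻¹ : (ZMod (p ^ (m + 1)))ˣ) : ZMod (p ^ (m + 1)))
              • Jmat (ZMod (p ^ (m + 1))) := by rw [h1']
    have hone : ((ψ g : (ZMod (p ^ (m + 1)))ˣ) : ZMod (p ^ (m + 1)))
        * ((ψ h : (ZMod (p ^ (m + 1)))ˣ) : ZMod (p ^ (m + 1)))
        * (((ψ (g * h))⁻¹ : (ZMod (p ^ (m + 1)))ˣ) : ZMod (p ^ (m + 1))) = 1 := by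
      rw [← Units.val_mul, ← map_mul ψ, ← Units.val_mul, mul_inv_cancel, Units.val_one]
    calc (ϱ g * ϱ h * (ϱ (g * h))⁻¹)ᵀ * Jmat (ZMod (p ^ (m + 1)))
          * (ϱ g * ϱ h * (ϱ (g * h))⁻¹)
        = ((ϱ (g * h))⁻¹)ᵀ * ((ϱ h)ᵀ * ((ϱ g)ᵀ * Jmat (ZMod (p ^ (m + 1))) * ϱ g) * ϱ h)
            * (ϱ (g * h))⁻¹ := by
          simp only [Matrix.transpose_mul]
          noncomm_ring
      _ = ((ϱ (g * h))⁻¹)ᵀ * ((ϱ h)ᵀ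
            * (((ψ g : (ZMod (p ^ (m + 1)))ˣ) : ZMod (p ^ (m + 1))) • Jmat (ZMod (p ^ (m + 1))))
            * ϱ h) * (ϱ (g * h))⁻¹ := by rw [hν g]
      _ = ((ψ g : (ZMod (p ^ (m + 1)))ˣ) : ZMod (p ^ (m + 1)))
            • (((ϱ (g * h))⁻¹)ᵀ * ((ϱ h)ᵀ * Jmat (ZMod (p ^ (m + 1))) * ϱ h)
              * (ϱ (g * h))⁻¹) := by
          simp only [mul_smul_comm, smul_mul_assoc]
      _ = ((ψ g : (ZMod (p ^ (m + 1)))ˣ) : ZMod (p ^ (m + 1)))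
            • (((ϱ (g * h))⁻¹)ᵀ
              * (((ψ h : (ZMod (p ^ (m + 1)))ˣ) : ZMod (p ^ (m + 1))) • Jmat (ZMod (p ^ (m + 1))))
              * (ϱ (g * h))⁻¹) := by rw [hν h]
      _ = ((ψ g : (ZMod (p ^ (m + 1)))ˣ) : ZMod (p ^ (m + 1)))
            • (((ψ h : (ZMod (p ^ (m + 1)))ˣ) : ZMod (p ^ (m + 1)))
              • (((ϱ (g * h))⁻¹)ᵀ * Jmat (ZMod (p ^ (m + 1))) * (ϱ (g * h))⁻¹)) := by
          simp only [mul_smul_comm, smul_mul_assoc]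
      _ = ((ψ g : (ZMod (p ^ (m + 1)))ˣ) : ZMod (p ^ (m + 1)))
            • (((ψ h : (ZMod (p ^ (m + 1)))ˣ) : ZMod (p ^ (m + 1)))
              • ((((ψ (g * h))⁻¹ : (ZMod (p ^ (m + 1)))ˣ) : ZMod (p ^ (m + 1)))
                • Jmat (ZMod (p ^ (m + 1))))) := by rw [h2]
      _ = Jmat (ZMod (p ^ (m + 1))) := by
          rw [smul_smul, smul_smul, hone, one_smul]
  -- reduction of the error term mod p^m is 1
  have hEπ : ∀ g h : G, (ϱ g * ϱ h * (ϱ (g * h))⁻¹).map ⇑π = 1 := by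
    intro g h
    rw [show (ϱ g * ϱ h * (ϱ (g * h))⁻¹).map ⇑π = π.mapMatrix (ϱ g * ϱ h * (ϱ (g * h))⁻¹)
      from rfl]
    rw [_root_.map_mul, _root_.map_mul]
    simp only [RingHom.mapMatrix_apply]
    rw [hred' g, hred' h, ← hρmul g h, ← hred' (g * h)]
    rw [show (ϱ (g * h)).map ⇑π = π.mapMatrix (ϱ (g * h)) from rfl,
      show ((ϱ (g * h))⁻¹).map ⇑π = π.mapMatrix ((ϱ (g * h))⁻¹) from rfl,
      ← _root_.map_mul, hmulinv (g * h), _root_.map_one]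
  -- mapping back to ZMod p
  have hback : ∀ C : Matrix (Fin 4) (Fin 4) (ZMod p),
      ((C).map (fun x => (x.val : ZMod (p ^ (m + 1))))).map ⇑φ = C := by
    intro C
    ext i j
    rw [Matrix.map_apply, Matrix.map_apply, hφdef]
    exact aux_iota_phi p m _ (C i j)
  constructor
  · -- existence and uniqueness
    intro g h
    have hdvd : ∀ i j, p ^ m ∣ ((ϱ g * ϱ h * (ϱ (g * h))⁻¹ - 1) i j).val := by
      intro i j
      have hmap : (ϱ g * ϱ h * (ϱ (g * h))⁻¹ - 1).map ⇑π = 0 := by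
        rw [show (ϱ g * ϱ h * (ϱ (g * h))⁻¹ - 1).map ⇑π
            = π.mapMatrix (ϱ g * ϱ h * (ϱ (g * h))⁻¹ - 1) from rfl]
        rw [map_sub, _root_.map_one]
        rw [show π.mapMatrix (ϱ g * ϱ h * (ϱ (g * h))⁻¹)
            = (ϱ g * ϱ h * (ϱ (g * h))⁻¹).map ⇑π from rfl]
        rw [hEπ g h, sub_self]
      have hentry : π ((ϱ g * ϱ h * (ϱ (g * h))⁻¹ - 1) i j) = 0 := by
        have h2 := congrFun (congrFun hmap i) j
        simpa [Matrix.map_apply] using h2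
      exact aux_pi_dvd p m _ _ hentry
    set Cm : Matrix (Fin 4) (Fin 4) (ZMod p) := Matrix.of (fun i j =>
      ((((ϱ g * ϱ h * (ϱ (g * h))⁻¹ - 1) i j).val / p ^ m : ℕ) : ZMod p)) with hCm
    have heq : ϱ g * ϱ h * (ϱ (g * h))⁻¹
        = 1 + ((p : ZMod (p ^ (m + 1))) ^ m) • (Cm).map (fun x => (x.val : ZMod (p ^ (m + 1)))) := by
      ext i j
      rw [Matrix.add_apply, Matrix.smul_apply, Matrix.map_apply, smul_eq_mul]
      rw [show Cm i j
          = ((((ϱ g * ϱ h * (ϱ (g * h))⁻¹ - 1) i j).val / p ^ m : ℕ) : ZMod p) from rfl]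
      rw [aux_div p m ((ϱ g * ϱ h * (ϱ (g * h))⁻¹ - 1) i j) (hdvd i j)]
      simp [Matrix.sub_apply]
    refine ⟨Cm, ⟨hsp _ _ (hJJ g h) heq, heq⟩, ?_⟩
    rintro C' ⟨-, hC'⟩
    ext i j
    apply aux_inj p m
    have h1 : ((p : ZMod (p ^ (m + 1))) ^ m) • (C').map (fun x => (x.val : ZMod (p ^ (m + 1)))) = ((p : ZMod (p ^ (m + 1))) ^ m) • (Cm).map (fun x => (x.val : ZMod (p ^ (m + 1)))) :=
      add_left_cancel (hC'.symm.trans heq)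
    have h2 := congrFun (congrFun h1 i) j
    simpa [Matrix.smul_apply, Matrix.map_apply, smul_eq_mul] using h2
  · -- cocycle identity
    intro c hc g h k
    have hprod : (ϱ g * ϱ h * (ϱ (g * h))⁻¹) * (ϱ (g * h) * ϱ k * (ϱ (g * h * k))⁻¹)
        = ϱ g * (ϱ h * ϱ k * (ϱ (h * k))⁻¹) * (ϱ g)⁻¹
          * (ϱ g * ϱ (h * k) * (ϱ (g * (h * k)))⁻¹) := by
      have e1 : (ϱ g * ϱ h * (ϱ (g * h))⁻¹) * (ϱ (g * h) * ϱ k * (ϱ (g * h * k))⁻¹)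
          = ϱ g * ϱ h * ϱ k * (ϱ (g * h * k))⁻¹ := by
        calc (ϱ g * ϱ h * (ϱ (g * h))⁻¹) * (ϱ (g * h) * ϱ k * (ϱ (g * h * k))⁻¹)
            = (ϱ g * ϱ h) * ((ϱ (g * h))⁻¹ * ϱ (g * h)) * (ϱ k * (ϱ (g * h * k))⁻¹) := by
              noncomm_ring
          _ = ϱ g * ϱ h * ϱ k * (ϱ (g * h * k))⁻¹ := by
              rw [hinvmul (g * h), mul_one]
              noncomm_ring
      have e2 : ϱ g * (ϱ h * ϱ k * (ϱ (h * k))⁻¹) * (ϱ g)⁻¹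
            * (ϱ g * ϱ (h * k) * (ϱ (g * (h * k)))⁻¹)
          = ϱ g * ϱ h * ϱ k * (ϱ (g * h * k))⁻¹ := by
        rw [← mul_assoc g h k]
        calc ϱ g * (ϱ h * ϱ k * (ϱ (h * k))⁻¹) * (ϱ g)⁻¹
              * (ϱ g * ϱ (h * k) * (ϱ (g * h * k))⁻¹)
            = ϱ g * (ϱ h * ϱ k) * ((ϱ (h * k))⁻¹ * (((ϱ g)⁻¹ * ϱ g) * ϱ (h * k)))
              * (ϱ (g * h * k))⁻¹ := by noncomm_ring
          _ = ϱ g * ϱ h * ϱ k * (ϱ (g * h * k))⁻¹ := by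
              rw [hinvmul g, one_mul, hinvmul (h * k), mul_one]
              noncomm_ring
      rw [e1, e2]
    rw [(hc g h).2, (hc (g * h) k).2, (hc h k).2, (hc g (h * k)).2] at hprod
    have hz : ((p : ZMod (p ^ (m + 1))) ^ m) • ((c g h).map (fun x => (x.val : ZMod (p ^ (m + 1)))) + (c (g * h) k).map (fun x => (x.val : ZMod (p ^ (m + 1))))
          - (ϱ g * (c h k).map (fun x => (x.val : ZMod (p ^ (m + 1)))) * (ϱ g)⁻¹ + (c g (h * k)).map (fun x => (x.val : ZMod (p ^ (m + 1)))))) = 0 := by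
      calc ((p : ZMod (p ^ (m + 1))) ^ m) • ((c g h).map (fun x => (x.val : ZMod (p ^ (m + 1)))) + (c (g * h) k).map (fun x => (x.val : ZMod (p ^ (m + 1))))
            - (ϱ g * (c h k).map (fun x => (x.val : ZMod (p ^ (m + 1)))) * (ϱ g)⁻¹ + (c g (h * k)).map (fun x => (x.val : ZMod (p ^ (m + 1))))))
          = (1 + ((p : ZMod (p ^ (m + 1))) ^ m) • (c g h).map (fun x => (x.val : ZMod (p ^ (m + 1))))) * (1 + ((p : ZMod (p ^ (m + 1))) ^ m) • (c (g * h) k).map (fun x => (x.val : ZMod (p ^ (m + 1)))))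
            - ϱ g * (1 + ((p : ZMod (p ^ (m + 1))) ^ m) • (c h k).map (fun x => (x.val : ZMod (p ^ (m + 1))))) * (ϱ g)⁻¹
              * (1 + ((p : ZMod (p ^ (m + 1))) ^ m) • (c g (h * k)).map (fun x => (x.val : ZMod (p ^ (m + 1))))) := by
            simp only [mul_add, add_mul, mul_one, one_mul, smul_mul_assoc, mul_smul_comm,
              smul_smul, hq2, zero_smul, smul_add, smul_sub, hmulinv g, add_zero]
            abel
        _ = 0 := by rw [hprod]; exact sub_self _
    have h0 := hphi _ hz
    have hρinv : ((ϱ g)⁻¹).map ⇑φ = ((ρm g).map ⇑σ)⁻¹ := by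
      symm
      apply Matrix.inv_eq_right_inv
      rw [← hφρ g]
      calc (ϱ g).map ⇑φ * ((ϱ g)⁻¹).map ⇑φ
          = φ.mapMatrix (ϱ g) * φ.mapMatrix ((ϱ g)⁻¹) := rfl
        _ = φ.mapMatrix (ϱ g * (ϱ g)⁻¹) := (_root_.map_mul _ _ _).symm
        _ = 1 := by rw [hmulinv g, _root_.map_one]
    have hfin : c g h + c (g * h) k
        - ((ρm g).map ⇑σ * c h k * ((ρm g).map ⇑σ)⁻¹ + c g (h * k)) = 0 := by
      calc c g h + c (g * h) k
            - ((ρm g).map ⇑σ * c h k * ((ρm g).map ⇑σ)⁻¹ + c g (h * k))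
          = ((c g h).map (fun x => (x.val : ZMod (p ^ (m + 1)))) + (c (g * h) k).map (fun x => (x.val : ZMod (p ^ (m + 1))))
            - (ϱ g * (c h k).map (fun x => (x.val : ZMod (p ^ (m + 1)))) * (ϱ g)⁻¹ + (c g (h * k)).map (fun x => (x.val : ZMod (p ^ (m + 1)))))).map ⇑φ := by
            rw [show ((c g h).map (fun x => (x.val : ZMod (p ^ (m + 1)))) + (c (g * h) k).map (fun x => (x.val : ZMod (p ^ (m + 1))))
              - (ϱ g * (c h k).map (fun x => (x.val : ZMod (p ^ (m + 1)))) * (ϱ g)⁻¹ + (c g (h * k)).map (fun x => (x.val : ZMod (p ^ (m + 1)))))).map ⇑φ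
              = φ.mapMatrix ((c g h).map (fun x => (x.val : ZMod (p ^ (m + 1)))) + (c (g * h) k).map (fun x => (x.val : ZMod (p ^ (m + 1))))
              - (ϱ g * (c h k).map (fun x => (x.val : ZMod (p ^ (m + 1)))) * (ϱ g)⁻¹ + (c g (h * k)).map (fun x => (x.val : ZMod (p ^ (m + 1)))))) from rfl]
            rw [map_sub, map_add, map_add, _root_.map_mul, _root_.map_mul]
            simp only [RingHom.mapMatrix_apply]
            rw [hback (c g h), hback (c (g * h) k), hback (c h k), hback (c g (h * k)),
              hφρ g, hρinv]
        _ = 0 := h0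
    have hgoal : (ρm g).map ⇑σ * c h k * ((ρm g).map ⇑σ)⁻¹ - c (g * h) k + c g (h * k) - c g h
        = -(c g h + c (g * h) k
            - ((ρm g).map ⇑σ * c h k * ((ρm g).map ⇑σ)⁻¹ + c g (h * k))) := by abel
    show (ρm g).map ⇑σ * c h k * ((ρm g).map ⇑σ)⁻¹ - c (g * h) k + c g (h * k) - c g h = 0
    rw [hgoal, hfin, neg_zero]
end

section
/- Let p be a prime and l, m ≥ 1 integers. Let a, b, S, T ∈ M₄(ℤ_p) and set x = 1 + p^l·a + p^{l+1}·S and y = 1 + p^m·b + p^{m+1}·T. Then x and y are invertible in M₄(ℤ_p), and the commutator satisfies x·y·x⁻¹·y⁻¹ ≡ 1 + p^{l+m}·(ab − ba) (mod p^{l+m+1}·M₄(ℤ_p)). -/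
open Matrix

lemma aux_unit {p : ℕ} [Fact p.Prime] (z : Matrix (Fin 4) (Fin 4) ℤ_[p]) :
    IsUnit (1 + (p : ℤ_[p]) • z) := by
  rw [Matrix.isUnit_iff_isUnit_det]
  have hmap : (PadicInt.toZMod (p := p)).mapMatrix (1 + (p : ℤ_[p]) • z) = 1 := by
    ext i j
    simp [Matrix.one_apply, Matrix.add_apply, Matrix.smul_apply, smul_eq_mul,
      apply_ite (PadicInt.toZMod (p := p))]
  have hdet : PadicInt.toZMod ((1 + (p : ℤ_[p]) • z).det) = 1 := by
    rw [RingHom.map_det, hmap, Matrix.det_one]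
  by_contra hns
  have hker : (1 + (p : ℤ_[p]) • z).det ∈ RingHom.ker (PadicInt.toZMod (p := p)) := by
    rw [PadicInt.ker_toZMod, IsLocalRing.mem_maximalIdeal]
    exact hns
  rw [RingHom.mem_ker, hdet] at hker
  exact one_ne_zero hker

/-- For `x = 1 + p^l·a + p^{l+1}·S` and `y = 1 + p^m·b + p^{m+1}·T` in `M₄(ℤ_p)`
(`l, m ≥ 1`), both `x` and `y` are invertible and
`x·y·x⁻¹·y⁻¹ ≡ 1 + p^{l+m}·(ab − ba) (mod p^{l+m+1}·M₄(ℤ_p))`. -/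
theorem commutator_congruence (p : ℕ) [Fact p.Prime] (l m : ℕ) (hl : 1 ≤ l) (hm : 1 ≤ m)
    (a b S T : Matrix (Fin 4) (Fin 4) ℤ_[p]) :
    IsUnit (1 + ((p : ℤ_[p]) ^ l) • a + ((p : ℤ_[p]) ^ (l + 1)) • S) ∧
    IsUnit (1 + ((p : ℤ_[p]) ^ m) • b + ((p : ℤ_[p]) ^ (m + 1)) • T) ∧
    ∃ E : Matrix (Fin 4) (Fin 4) ℤ_[p],
      (1 + ((p : ℤ_[p]) ^ l) • a + ((p : ℤ_[p]) ^ (l + 1)) • S) *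
          (1 + ((p : ℤ_[p]) ^ m) • b + ((p : ℤ_[p]) ^ (m + 1)) • T) *
          Ring.inverse (1 + ((p : ℤ_[p]) ^ l) • a + ((p : ℤ_[p]) ^ (l + 1)) • S) *
          Ring.inverse (1 + ((p : ℤ_[p]) ^ m) • b + ((p : ℤ_[p]) ^ (m + 1)) • T)
        = 1 + ((p : ℤ_[p]) ^ (l + m)) • (a * b - b * a) + ((p : ℤ_[p]) ^ (l + m + 1)) • E := by
  obtain ⟨l', rfl⟩ : ∃ l', l = l' + 1 := ⟨l - 1, (Nat.succ_pred_eq_of_pos hl).symm⟩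
  obtain ⟨m', rfl⟩ : ∃ m', m = m' + 1 := ⟨m - 1, (Nat.succ_pred_eq_of_pos hm).symm⟩
  set q : ℤ_[p] := (p : ℤ_[p]) with hq
  set x : Matrix (Fin 4) (Fin 4) ℤ_[p] := 1 + (q ^ (l' + 1)) • a + (q ^ (l' + 1 + 1)) • S with hxdef
  set y : Matrix (Fin 4) (Fin 4) ℤ_[p] := 1 + (q ^ (m' + 1)) • b + (q ^ (m' + 1 + 1)) • T with hydef
  set zx : Matrix (Fin 4) (Fin 4) ℤ_[p] := (q ^ l') • a + (q ^ (l' + 1)) • S with hzx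
  set zy : Matrix (Fin 4) (Fin 4) ℤ_[p] := (q ^ m') • b + (q ^ (m' + 1)) • T with hzy
  have hx1 : x = 1 + q • zx := by rw [hxdef, hzx]; module
  have hy1 : y = 1 + q • zy := by rw [hydef, hzy]; module
  have hx : IsUnit x := hx1 ▸ aux_unit zx
  have hy : IsUnit y := hy1 ▸ aux_unit zy
  clear_value x y zx zy
  refine ⟨hx, hy, ?_⟩
  set xi := Ring.inverse x with hxi
  set yi := Ring.inverse y with hyi
  have hxxi : x * xi = 1 := Ring.mul_inverse_cancel x hx
  have hyyi : y * yi = 1 := Ring.mul_inverse_cancel y hy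
  -- inverse shapes
  have hxi1 : xi = 1 - q • (zx * xi) := by
    have h : xi + q • (zx * xi) = 1 := by
      have h2 := hxxi
      rw [hx1] at h2
      calc xi + q • (zx * xi) = (1 + q • zx) * xi := by
            rw [add_mul, one_mul, smul_mul_assoc]
        _ = 1 := h2
    linear_combination (norm := module) h
  have hyi1 : yi = 1 - q • (zy * yi) := by
    have h : yi + q • (zy * yi) = 1 := by
      have h2 := hyyi
      rw [hy1] at h2
      calc yi + q • (zy * yi) = (1 + q • zy) * yi := by
            rw [add_mul, one_mul, smul_mul_assoc]
        _ = 1 := h2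
    linear_combination (norm := module) h
  set W : Matrix (Fin 4) (Fin 4) ℤ_[p] :=
    q • ((zx * xi) * (zy * yi)) - zx * xi - zy * yi with hW
  have hg : xi * yi = 1 + q • W := by
    rw [hxi1, hyi1, hW]
    simp only [sub_mul, mul_sub, one_mul, mul_one, smul_mul_assoc, mul_smul_comm, smul_smul,
      smul_sub, smul_add]
    module
  -- commutator identity
  have key : x * y * xi * yi = 1 + (x * y - y * x) * (xi * yi) := by
    have h : x * y * xi * yi = (x * y - y * x) * (xi * yi) + y * (x * xi) * yi := by
      noncomm_ring
    rw [h, hxxi, mul_one, hyyi, add_comm]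
  set c : Matrix (Fin 4) (Fin 4) ℤ_[p] := a * b - b * a with hc
  set D : Matrix (Fin 4) (Fin 4) ℤ_[p] :=
    a * T - T * a + S * b - b * S + q • (S * T - T * S) with hD
  have hcomm : x * y - y * x = (q ^ (l' + m' + 2)) • c + (q ^ (l' + m' + 3)) • D := by
    rw [hxdef, hydef, hc, hD]
    simp only [add_mul, mul_add, one_mul, mul_one, smul_mul_assoc, mul_smul_comm, smul_smul,
      smul_sub, smul_add]
    module
  refine ⟨c * W + D + q • (D * W), ?_⟩
  rw [key, hcomm, hg]
  simp only [add_mul, mul_add, one_mul, mul_one, smul_mul_assoc, mul_smul_comm, smul_smul,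
    smul_sub, smul_add]
  module
end

section
/- Let p be an odd prime and m ≥ 1 an integer, and let H be a closed subgroup of Sp₄(ℤ_p) (with the p-adic topology). Suppose that for every B ∈ sp₄(𝔽_p) there exists h ∈ H with h ≡ 1 + p^m·B̃ (mod p^{m+1}·M₄(ℤ_p)), where B̃ ∈ M₄(ℤ_p) is any lift of B. Then: (1) the same property holds with m replaced by any integer k ≥ m; (2) H contains every element of Sp₄(ℤ_p) that is congruent to the identity modulo p^m·M₄(ℤ_p). -/
open Matrix

lemma aux_sum {R M : Type*} [CommRing R] [AddCommGroup M] [Module R M] {ι : Type*}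
    (s : Finset ι) (c : R) (f : ι → M) (h : ∀ i ∈ s, ∃ e, f i = c • e) :
    ∃ e, (∑ i ∈ s, f i) = c • e := by
  classical
  induction s using Finset.induction_on with
  | empty => exact ⟨0, by simp⟩
  | insert a s hx ih =>
    obtain ⟨e1, he1⟩ := h _ (Finset.mem_insert_self _ _)
    obtain ⟨e2, he2⟩ := ih (fun i hi => h i (Finset.mem_insert_of_mem hi))
    exact ⟨e1 + e2, by rw [Finset.sum_insert hx, he1, he2, smul_add]⟩

lemma Jmat_map (p : ℕ) [Fact p.Prime] :
    (Jmat ℤ_[p]).map ⇑(PadicInt.toZMod (p := p)) = Jmat (ZMod p) := by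
  ext i j
  fin_cases i <;> fin_cases j <;>
    simp [Jmat, Matrix.map_apply, Matrix.cons_val', Matrix.cons_val_zero,
      Matrix.cons_val_one, Matrix.head_cons, Matrix.empty_val',
      Matrix.cons_val_fin_one, Matrix.head_fin_const, Matrix.vecHead, Matrix.vecTail]

lemma aux_isUnit (p : ℕ) [Fact p.Prime] (x : Matrix (Fin 4) (Fin 4) ℤ_[p])
    (hx : xᵀ * Jmat ℤ_[p] * x = Jmat ℤ_[p]) : IsUnit x := by
  have hJ : (Jmat ℤ_[p]).det = 1 := by
    simp [Jmat, Matrix.det_succ_row_zero, Fin.sum_univ_succ, Fin.succAbove]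
  have hd := congrArg Matrix.det hx
  rw [Matrix.det_mul, Matrix.det_mul, Matrix.det_transpose, hJ, mul_one] at hd
  exact (Matrix.isUnit_iff_isUnit_det x).mpr (IsUnit.of_mul_eq_one _ hd)

lemma sp_mul (p : ℕ) [Fact p.Prime] (a b : Matrix (Fin 4) (Fin 4) ℤ_[p])
    (ha : aᵀ * Jmat ℤ_[p] * a = Jmat ℤ_[p]) (hb : bᵀ * Jmat ℤ_[p] * b = Jmat ℤ_[p]) :
    (a * b)ᵀ * Jmat ℤ_[p] * (a * b) = Jmat ℤ_[p] := by
  have h : (a * b)ᵀ * Jmat ℤ_[p] * (a * b) = bᵀ * (aᵀ * Jmat ℤ_[p] * a) * b := by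
    rw [transpose_mul]; noncomm_ring
  rw [h, ha, hb]

lemma aux_lift (p : ℕ) [Fact p.Prime] (E : Matrix (Fin 4) (Fin 4) ℤ_[p]) :
    ∃ F, E = (E.map ⇑(PadicInt.toZMod)).map (fun x => (x.val : ℤ_[p])) + (p : ℤ_[p]) • F := by
  have hdvd : ∀ i j, (p : ℤ_[p]) ∣ (E i j - (((PadicInt.toZMod (E i j)).val : ℕ) : ℤ_[p])) := by
    intro i j
    have h0 : PadicInt.toZMod (E i j - (((PadicInt.toZMod (E i j)).val : ℕ) : ℤ_[p])) = 0 := by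
      rw [map_sub, map_natCast]
      rw [ZMod.natCast_zmod_val, sub_self]
    have hker : E i j - (((PadicInt.toZMod (E i j)).val : ℕ) : ℤ_[p])
        ∈ RingHom.ker (PadicInt.toZMod (p := p)) := h0
    rwa [PadicInt.ker_toZMod, PadicInt.maximalIdeal_eq_span_p, Ideal.mem_span_singleton] at hker
  choose F hF using fun i j => hdvd i j
  refine ⟨Matrix.of F, ?_⟩
  ext i j
  simp only [Matrix.map_apply, Matrix.add_apply, Matrix.smul_apply, smul_eq_mul, Matrix.of_apply]
  linear_combination hF i j

lemma aux_red (p : ℕ) [Fact p.Prime] {j : ℕ} (hj : 1 ≤ j) (E : Matrix (Fin 4) (Fin 4) ℤ_[p])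
    (hy : (1 + ((p : ℤ_[p]) ^ j) • E)ᵀ * Jmat ℤ_[p] * (1 + ((p : ℤ_[p]) ^ j) • E) = Jmat ℤ_[p]) :
    (E.map ⇑(PadicInt.toZMod))ᵀ * Jmat (ZMod p) + Jmat (ZMod p) * (E.map ⇑(PadicInt.toZMod)) = 0 := by
  set c : ℤ_[p] := (p : ℤ_[p]) ^ j with hc
  have expand : (1 + c • E)ᵀ * Jmat ℤ_[p] * (1 + c • E)
      = Jmat ℤ_[p] + c • (Eᵀ * Jmat ℤ_[p] + Jmat ℤ_[p] * E + c • (Eᵀ * Jmat ℤ_[p] * E)) := by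
    simp only [transpose_add, transpose_one, transpose_smul, add_mul, mul_add, one_mul, mul_one,
      smul_mul_assoc, mul_smul_comm, smul_smul, smul_add]
    module
  have hz : c • (Eᵀ * Jmat ℤ_[p] + Jmat ℤ_[p] * E + c • (Eᵀ * Jmat ℤ_[p] * E)) = 0 := by
    rw [expand] at hy
    exact add_eq_left.mp hy
  have hcne : c ≠ 0 := pow_ne_zero _ (Nat.cast_ne_zero.mpr (Fact.out : p.Prime).ne_zero)
  have hM : Eᵀ * Jmat ℤ_[p] + Jmat ℤ_[p] * E = -(c • (Eᵀ * Jmat ℤ_[p] * E)) := by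
    have h0 : Eᵀ * Jmat ℤ_[p] + Jmat ℤ_[p] * E + c • (Eᵀ * Jmat ℤ_[p] * E) = 0 := by
      ext i j'
      have h1 := congrFun (congrFun hz i) j'
      simp only [Matrix.smul_apply, smul_eq_mul, Matrix.zero_apply] at h1 ⊢
      exact (mul_eq_zero.mp h1).resolve_left hcne
    exact eq_neg_of_add_eq_zero_left h0
  have htoz : PadicInt.toZMod (p := p) c = 0 := by
    rw [hc, map_pow, map_natCast, ZMod.natCast_self, zero_pow (by omega : j ≠ 0)]
  have key := congrArg (⇑(PadicInt.toZMod (p := p)).mapMatrix) hM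
  rw [map_add, _root_.map_mul, _root_.map_mul, map_neg] at key
  have hsm : (PadicInt.toZMod (p := p)).mapMatrix (c • (Eᵀ * Jmat ℤ_[p] * E))
      = PadicInt.toZMod (p := p) c • (PadicInt.toZMod (p := p)).mapMatrix (Eᵀ * Jmat ℤ_[p] * E) := by
    simp only [RingHom.mapMatrix_apply]
    exact Matrix.map_smul' _ _ _ (fun a b => map_mul _ a b)
  rw [hsm, htoz, zero_smul, neg_zero] at key
  have hT : (PadicInt.toZMod (p := p)).mapMatrix Eᵀ = (E.map ⇑(PadicInt.toZMod))ᵀ := by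
    simp only [RingHom.mapMatrix_apply, Matrix.transpose_map]
  have hJ : (PadicInt.toZMod (p := p)).mapMatrix (Jmat ℤ_[p]) = Jmat (ZMod p) := by
    simp only [RingHom.mapMatrix_apply, Jmat_map]
  have hE : (PadicInt.toZMod (p := p)).mapMatrix E = E.map ⇑(PadicInt.toZMod) := rfl
  rw [hT, hJ, hE] at key
  exact key

set_option maxHeartbeats 1000000 in
lemma aux_pow (p : ℕ) [Fact p.Prime] (hp3 : 3 ≤ p) {k : ℕ} (hk : 1 ≤ k)
    (A : Matrix (Fin 4) (Fin 4) ℤ_[p]) :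
    ∃ E, (1 + ((p : ℤ_[p]) ^ k) • A) ^ p
      = 1 + ((p : ℤ_[p]) ^ (k + 1)) • A + ((p : ℤ_[p]) ^ (k + 2)) • E := by
  classical
  set X : Matrix (Fin 4) (Fin 4) ℤ_[p] := ((p : ℤ_[p]) ^ k) • A with hX
  have hbin := (Commute.one_right X).add_pow p
  simp only [one_pow, mul_one] at hbin
  obtain ⟨t, ht⟩ : ∃ t, p = t + 2 := ⟨p - 2, by omega⟩
  have hterm : ∀ i ∈ Finset.range (t + 1),
      ∃ e, X ^ (i + 2) * ((p.choose (i + 2) : ℕ) : Matrix (Fin 4) (Fin 4) ℤ_[p])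
        = ((p : ℤ_[p]) ^ (k + 2)) • e := by
    intro i hi
    have him : i + 2 ≤ p := by
      simp only [Finset.mem_range] at hi; omega
    have hcast : X ^ (i + 2) * ((p.choose (i + 2) : ℕ) : Matrix (Fin 4) (Fin 4) ℤ_[p])
        = (((p.choose (i + 2) : ℕ) : ℤ_[p]) * ((p : ℤ_[p]) ^ (k * (i + 2)))) • A ^ (i + 2) := by
      rw [hX, smul_pow, ← (Nat.cast_commute (p.choose (i + 2))
        ((((p : ℤ_[p]) ^ k) ^ (i+2)) • A ^ (i + 2))).eq, ← nsmul_eq_mul,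
        ← Nat.cast_smul_eq_nsmul ℤ_[p], smul_smul, ← pow_mul]
    have hdvd : ((p : ℤ_[p]) ^ (k + 2)) ∣
        (((p.choose (i + 2) : ℕ) : ℤ_[p]) * ((p : ℤ_[p]) ^ (k * (i + 2)))) := by
      by_cases hip : i + 2 = p
      · have hle : k + 2 ≤ k * (i + 2) := by
          have h3 : k * 3 ≤ k * (i + 2) := by
            rw [hip]; exact Nat.mul_le_mul_left k hp3
          omega
        exact Dvd.dvd.mul_left (pow_dvd_pow _ hle) _
      · have hdc : p ∣ p.choose (i + 2) :=
          (Fact.out : p.Prime).dvd_choose_self (by omega) (by omega)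
        obtain ⟨s, hs⟩ := hdc
        have hle : k + 2 ≤ 1 + k * (i + 2) := by
          have h2 : k * 2 ≤ k * (i + 2) := Nat.mul_le_mul_left k (by omega)
          omega
        calc ((p : ℤ_[p]) ^ (k + 2)) ∣ (p : ℤ_[p]) ^ (1 + k * (i + 2)) := pow_dvd_pow _ hle
          _ = (p : ℤ_[p]) * (p : ℤ_[p]) ^ (k * (i + 2)) := by rw [pow_add, pow_one]
          _ ∣ (((p.choose (i + 2) : ℕ) : ℤ_[p]) * ((p : ℤ_[p]) ^ (k * (i + 2)))) := by
              rw [hs]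
              push_cast
              exact mul_dvd_mul (dvd_mul_right _ _) dvd_rfl
    obtain ⟨u, hu⟩ := hdvd
    exact ⟨u • A ^ (i + 2), by rw [hcast, hu, mul_smul]⟩
  obtain ⟨E, hE⟩ := aux_sum (Finset.range (t + 1)) ((p : ℤ_[p]) ^ (k + 2))
    (fun i => X ^ (i + 2) * ((p.choose (i + 2) : ℕ) : Matrix (Fin 4) (Fin 4) ℤ_[p])) hterm
  refine ⟨E, ?_⟩
  have hsplit : ∑ i ∈ Finset.range (p + 1),
      X ^ i * ((p.choose i : ℕ) : Matrix (Fin 4) (Fin 4) ℤ_[p])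
      = (∑ i ∈ Finset.range (t + 1),
          X ^ (i + 2) * ((p.choose (i + 2) : ℕ) : Matrix (Fin 4) (Fin 4) ℤ_[p]))
        + X ^ 1 * ((p.choose 1 : ℕ) : Matrix (Fin 4) (Fin 4) ℤ_[p])
        + X ^ 0 * ((p.choose 0 : ℕ) : Matrix (Fin 4) (Fin 4) ℤ_[p]) := by
    have h1 : p + 1 = (t + 2) + 1 := by omega
    rw [h1, Finset.sum_range_succ', Finset.sum_range_succ']
  have hf0 : X ^ 0 * ((p.choose 0 : ℕ) : Matrix (Fin 4) (Fin 4) ℤ_[p]) = 1 := by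
    simp
  have hf1 : X ^ 1 * ((p.choose 1 : ℕ) : Matrix (Fin 4) (Fin 4) ℤ_[p])
      = ((p : ℤ_[p]) ^ (k + 1)) • A := by
    rw [pow_one, Nat.choose_one_right, hX,
      ← (Nat.cast_commute p (((p : ℤ_[p]) ^ k) • A)).eq, ← nsmul_eq_mul,
      ← Nat.cast_smul_eq_nsmul ℤ_[p], smul_smul, ← pow_succ']
  rw [add_comm (1 : Matrix (Fin 4) (Fin 4) ℤ_[p]) X, hbin, hsplit, hf0, hf1, hE]
  abel

set_option maxHeartbeats 1000000 in
/-- Let `H` be a closed subgroup of `Sp₄(ℤ_p)` such that for every `B ∈ sp₄(𝔽_p)`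
there is `h ∈ H` with `h ≡ 1 + p^m·B̃ (mod p^{m+1})`. Then the same holds with `m`
replaced by any `k ≥ m`, and `H` contains every element of `Sp₄(ℤ_p)` congruent to
the identity modulo `p^m`. -/
theorem closed_subgroup_full_filtration (p : ℕ) [Fact p.Prime] (hp : p ≠ 2)
    (m : ℕ) (hm : 1 ≤ m)
    (H : Set (Matrix (Fin 4) (Fin 4) ℤ_[p]))
    (hclosed : IsClosed H)
    (hone : (1 : Matrix (Fin 4) (Fin 4) ℤ_[p]) ∈ H)
    (hmul : ∀ x ∈ H, ∀ y ∈ H, x * y ∈ H)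
    (hinv : ∀ x ∈ H, Ring.inverse x ∈ H)
    (hsp : ∀ x ∈ H, xᵀ * Jmat ℤ_[p] * x = Jmat ℤ_[p])
    (hfull : ∀ B : Matrix (Fin 4) (Fin 4) (ZMod p),
      Bᵀ * Jmat (ZMod p) + Jmat (ZMod p) * B = 0 →
      ∃ h ∈ H, ∃ E : Matrix (Fin 4) (Fin 4) ℤ_[p],
        h = 1 + ((p : ℤ_[p]) ^ m) • B.map (fun x => (x.val : ℤ_[p]))
              + ((p : ℤ_[p]) ^ (m + 1)) • E) :
    (∀ k : ℕ, m ≤ k →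
      ∀ B : Matrix (Fin 4) (Fin 4) (ZMod p),
        Bᵀ * Jmat (ZMod p) + Jmat (ZMod p) * B = 0 →
        ∃ h ∈ H, ∃ E : Matrix (Fin 4) (Fin 4) ℤ_[p],
          h = 1 + ((p : ℤ_[p]) ^ k) • B.map (fun x => (x.val : ℤ_[p]))
                + ((p : ℤ_[p]) ^ (k + 1)) • E) ∧
    (∀ x : Matrix (Fin 4) (Fin 4) ℤ_[p],
      xᵀ * Jmat ℤ_[p] * x = Jmat ℤ_[p] →
      (∃ E : Matrix (Fin 4) (Fin 4) ℤ_[p], x = 1 + ((p : ℤ_[p]) ^ m) • E) →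
      x ∈ H) := by
  have hp3 : 3 ≤ p := by
    have := (Fact.out : p.Prime).two_le
    omega
  have hpow : ∀ h ∈ H, ∀ n : ℕ, h ^ n ∈ H := by
    intro h hh n
    induction n with
    | zero => simpa using hone
    | succ n ih => rw [pow_succ]; exact hmul _ ih _ hh
  -- Part 1
  have part1 : ∀ k : ℕ, m ≤ k →
      ∀ B : Matrix (Fin 4) (Fin 4) (ZMod p),
        Bᵀ * Jmat (ZMod p) + Jmat (ZMod p) * B = 0 →
        ∃ h ∈ H, ∃ E : Matrix (Fin 4) (Fin 4) ℤ_[p],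
          h = 1 + ((p : ℤ_[p]) ^ k) • B.map (fun x => (x.val : ℤ_[p]))
                + ((p : ℤ_[p]) ^ (k + 1)) • E := by
    intro k hk
    induction k, hk using Nat.le_induction with
    | base => exact hfull
    | succ k hk ih =>
      intro B hB
      obtain ⟨h, hH, E, hEq⟩ := ih B hB
      refine ⟨h ^ p, hpow h hH p, ?_⟩
      have hA : h = 1 + ((p : ℤ_[p]) ^ k) •
          (B.map (fun x => (x.val : ℤ_[p])) + (p : ℤ_[p]) • E) := by
        rw [hEq]; module
      obtain ⟨E', hE'⟩ := aux_pow p hp3 (le_trans hm hk)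
        (B.map (fun x => (x.val : ℤ_[p])) + (p : ℤ_[p]) • E)
      refine ⟨E + E', ?_⟩
      rw [hA, hE']
      module
  refine ⟨part1, ?_⟩
  -- Part 2
  intro x hxsp hxform
  have step : ∀ j : ℕ, m ≤ j → ∀ y : Matrix (Fin 4) (Fin 4) ℤ_[p],
      yᵀ * Jmat ℤ_[p] * y = Jmat ℤ_[p] →
      (∃ E, y = 1 + ((p : ℤ_[p]) ^ j) • E) →
      ∃ h ∈ H, ∃ E', y = h * (1 + ((p : ℤ_[p]) ^ (j + 1)) • E') ∧
        (1 + ((p : ℤ_[p]) ^ (j + 1)) • E')ᵀ * Jmat ℤ_[p] *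
          (1 + ((p : ℤ_[p]) ^ (j + 1)) • E') = Jmat ℤ_[p] := by
    intro j hj y hysp hform
    obtain ⟨E, hyE⟩ := hform
    have hysp' := hysp
    rw [hyE] at hysp'
    have hB := aux_red p (le_trans hm hj) E hysp'
    obtain ⟨h, hH, E₁, hhE⟩ := part1 j hj (E.map ⇑(PadicInt.toZMod)) hB
    obtain ⟨F, hF⟩ := aux_lift p E
    have hu : IsUnit h := aux_isUnit p h (hsp h hH)
    set L : Matrix (Fin 4) (Fin 4) ℤ_[p] :=
      (E.map ⇑(PadicInt.toZMod)).map (fun x => (x.val : ℤ_[p])) with hL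
    have hyh : y = h + ((p : ℤ_[p]) ^ (j + 1)) • (F - E₁) := by
      rw [hyE, hF, hhE, smul_add, smul_smul, ← pow_succ, smul_sub]
      abel
    set y' : Matrix (Fin 4) (Fin 4) ℤ_[p] :=
      1 + ((p : ℤ_[p]) ^ (j + 1)) • (Ring.inverse h * (F - E₁)) with hy'def
    have hmul' : h * y' = y := by
      rw [hy'def, mul_add, mul_one, mul_smul_comm, ← Matrix.mul_assoc,
        Ring.mul_inverse_cancel _ hu, Matrix.one_mul]
      rw [hyh]
    have hy'inv : y' = Ring.inverse h * y := by
      rw [← hmul', ← Matrix.mul_assoc, Ring.inverse_mul_cancel _ hu, Matrix.one_mul]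
    have hy'sp : y'ᵀ * Jmat ℤ_[p] * y' = Jmat ℤ_[p] := by
      rw [hy'inv]
      exact sp_mul p _ _ (hsp _ (hinv h hH)) hysp
    exact ⟨h, hH, Ring.inverse h * (F - E₁), hmul'.symm, hy'sp⟩
  -- inductive construction of approximating sequence
  have hP : ∀ n : ℕ, ∃ g, g ∈ H ∧ ∃ E,
      x = g * (1 + ((p : ℤ_[p]) ^ (m + n)) • E) ∧
      (1 + ((p : ℤ_[p]) ^ (m + n)) • E)ᵀ * Jmat ℤ_[p] *
        (1 + ((p : ℤ_[p]) ^ (m + n)) • E) = Jmat ℤ_[p] := by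
    intro n
    induction n with
    | zero =>
      obtain ⟨E, hE⟩ := hxform
      refine ⟨1, hone, E, ?_, ?_⟩
      · rw [Matrix.one_mul]
        exact hE
      · have : (1 : Matrix (Fin 4) (Fin 4) ℤ_[p]) + ((p : ℤ_[p]) ^ (m + 0)) • E = x := hE.symm
        rw [this]
        exact hxsp
    | succ n ih =>
      obtain ⟨g, hg, E, hxg, hEsp⟩ := ih
      obtain ⟨h, hh, E', hyE', hy'sp⟩ := step (m + n) (Nat.le_add_right m n) _ hEsp ⟨E, rfl⟩
      refine ⟨g * h, hmul _ hg _ hh, E', ?_, hy'sp⟩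
      show x = g * h * (1 + ((p : ℤ_[p]) ^ (m + n + 1)) • E')
      rw [hxg, hyE', Matrix.mul_assoc]
  choose g hgH E heq hsp2 using hP
  have key : ∀ n, x - g n = ((p : ℤ_[p]) ^ (m + n)) • (g n * E n) := by
    intro n
    rw [heq n, mul_add, mul_one, mul_smul_comm, add_sub_cancel_left]
  have hnorm : ∀ n (i j : Fin 4), ‖g n i j - x i j‖ ≤ ((p : ℝ)⁻¹) ^ n := by
    intro n i j
    rw [norm_sub_rev]
    have h1 : x i j - g n i j = ((p : ℤ_[p]) ^ (m + n)) * (g n * E n) i j := by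
      have := congrFun (congrFun (key n) i) j
      simpa [Matrix.sub_apply, Matrix.smul_apply, smul_eq_mul] using this
    rw [h1]
    calc ‖((p : ℤ_[p]) ^ (m + n)) * (g n * E n) i j‖
        ≤ ‖((p : ℤ_[p]) ^ (m + n))‖ * ‖(g n * E n) i j‖ := norm_mul_le _ _
      _ ≤ ‖((p : ℤ_[p]) ^ (m + n))‖ * 1 :=
          mul_le_mul_of_nonneg_left (PadicInt.norm_le_one _) (norm_nonneg _)
      _ = ‖(p : ℤ_[p])‖ ^ (m + n) := by
          rw [mul_one, norm_pow]
      _ = ((p : ℝ)⁻¹) ^ (m + n) := by rw [PadicInt.norm_p]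
      _ ≤ ((p : ℝ)⁻¹) ^ n := by
          apply pow_le_pow_of_le_one (by positivity)
          · apply inv_le_one_of_one_le₀
            exact_mod_cast by omega
          · exact Nat.le_add_left n m
  have htend : Filter.Tendsto g Filter.atTop (nhds x) := by
    refine tendsto_pi_nhds.mpr ?_
    intro i
    rw [tendsto_pi_nhds]
    intro j
    rw [tendsto_iff_norm_sub_tendsto_zero]
    apply squeeze_zero (fun n => norm_nonneg _) (fun n => hnorm n i j)
    apply tendsto_pow_atTop_nhds_zero_of_lt_one (by positivity)
    apply inv_lt_one_of_one_lt₀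
    exact_mod_cast by omega
  exact hclosed.mem_of_tendsto htend (Filter.Eventually.of_forall hgH)
end

section
/- Let p be an odd prime and let E* be any finite subset of ℤ/(p−1)ℤ with 0 ∉ E* and h ∉ E*, where h denotes the class of (p−1)/2 in ℤ/(p−1)ℤ. Let e be the cardinality of E* and set Ē = E* ∪ {0, 1, h}. If 4e + 8 < (p−1)/2 (as integers), then there exist α, β ∈ ℤ/(p−1)ℤ with α + β odd (i.e. the image of α + β under the natural ring homomorphism ℤ/(p−1)ℤ → ℤ/2ℤ is 1) such that: (a) for every ε ∈ Ē, 2α ∉ {ε, −ε} and 2β ∉ {ε, −ε}; and (b) for every ε ∈ Ē, β ∉ {α+ε, α−ε, −α+ε, −α−ε}. -/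
def halfClass (p : ℕ) : ZMod (p - 1) := (((p - 1) / 2 : ℕ) : ZMod (p - 1))

open Finset

private lemma zmod_two_mul_eq_zero {N : ℕ} [NeZero N] (hN : 2 ∣ N) {x : ZMod N}
    (hx : 2 * x = 0) : x = 0 ∨ x = ((N / 2 : ℕ) : ZMod N) := by
  have hv : ((x.val : ℕ) : ZMod N) = x := ZMod.natCast_zmod_val x
  have h2 : (2 : ZMod N) * x = ((2 * x.val : ℕ) : ZMod N) := by push_cast [hv]; ring
  rw [h2, ZMod.natCast_eq_zero_iff] at hx
  have hlt : x.val < N := ZMod.val_lt x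
  obtain ⟨k, hk⟩ := hx
  have : x.val = 0 ∨ x.val = N / 2 := by
    rcases hN with ⟨m, hm⟩
    rcases Nat.lt_or_ge k 2 with hk2 | hk2
    · interval_cases k <;> omega
    · exfalso; nlinarith
  rcases this with h | h
  · left; rw [← hv, h]; simp
  · right; rw [← hv, h]

private lemma zmod_sol_card_le {N : ℕ} [NeZero N] (hN : 2 ∣ N) (v : ZMod N) :
    (univ.filter (fun x : ZMod N => 2 * x = v)).card ≤ 2 := by
  rcases (univ.filter (fun x : ZMod N => 2 * x = v)).eq_empty_or_nonempty with h | h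
  · simp [h]
  · obtain ⟨x₀, hx₀⟩ := h
    rw [mem_filter] at hx₀
    have hsub : (univ.filter (fun x : ZMod N => 2 * x = v))
        ⊆ {x₀, x₀ + ((N / 2 : ℕ) : ZMod N)} := by
      intro x hx
      rw [mem_filter] at hx
      have hz : 2 * (x - x₀) = 0 := by rw [mul_sub, hx.2, hx₀.2, sub_self]
      rcases zmod_two_mul_eq_zero hN hz with h | h
      · simp only [mem_insert, mem_singleton]
        left; have := sub_eq_zero.mp h; exact this
      · simp only [mem_insert, mem_singleton]
        right; rw [← h]; ring
    calc (univ.filter (fun x : ZMod N => 2 * x = v)).card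
        ≤ ({x₀, x₀ + ((N / 2 : ℕ) : ZMod N)} : Finset (ZMod N)).card :=
          card_le_card hsub
      _ ≤ 2 := card_insert_le _ _ |>.trans (by simp)

private lemma zmod2_eq01 : ∀ c : ZMod 2, c = 0 ∨ c = 1 := by decide

private lemma zmod_fiber_card {N : ℕ} [NeZero N] (hN : 2 ∣ N) (c : ZMod 2) :
    (univ.filter (fun x : ZMod N => ZMod.castHom hN (ZMod 2) x = c)).card = N / 2 := by
  set π := ZMod.castHom hN (ZMod 2) with hπ
  have key : (univ.filter (fun x : ZMod N => π x = 0)).card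
      = (univ.filter (fun x : ZMod N => π x = 1)).card := by
    apply card_bij' (fun x _ => x + 1) (fun y _ => y - 1)
    · intro a _; ring
    · intro a _; ring
    · intro a ha
      simp only [mem_filter, mem_univ, true_and] at ha ⊢
      rw [map_add, ha, map_one, zero_add]
    · intro a ha
      simp only [mem_filter, mem_univ, true_and] at ha ⊢
      rw [map_sub, ha, map_one, sub_self]
  have hsplit : (univ.filter (fun x : ZMod N => π x = 0)).card
      + (univ.filter (fun x : ZMod N => π x = 1)).card = N := by
    have h1 := card_filter_add_card_filter_not
      (s := (univ : Finset (ZMod N))) (p := fun x => π x = 0)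
    have h2 : (univ.filter (fun x : ZMod N => ¬ π x = 0))
        = (univ.filter (fun x : ZMod N => π x = 1)) := by
      apply filter_congr
      intro x _
      rcases zmod2_eq01 (π x) with h | h <;> simp [h]
    rw [h2] at h1
    rw [h1, card_univ, ZMod.card]
  rcases zmod2_eq01 c with h | h <;> rw [h] <;> omega

private lemma zmod2_aux1 : ∀ a b c : ZMod 2, b + a = 1 → b = a + c → c = 1 := by decide
private lemma zmod2_aux2 : ∀ a b c : ZMod 2, b + a = 1 → b = -a + c → c = 1 := by decide
private lemma zmod2_add_self : ∀ a : ZMod 2, a + a = 0 := by decide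

/-- For an odd prime `p` and a finite subset `E* ⊆ ℤ/(p−1)ℤ` with `0, h ∉ E*` and
`4·#E* + 8 < (p−1)/2`, there exist `α, β ∈ ℤ/(p−1)ℤ` with `α + β` odd satisfying
conditions (a) and (b) with respect to `Ē = E* ∪ {0, 1, h}`. -/
theorem exists_good_pair (p : ℕ) (hp : p.Prime) (hodd : p ≠ 2)
    (Estar : Finset (ZMod (p - 1)))
    (h0 : (0 : ZMod (p - 1)) ∉ Estar)
    (hh : halfClass p ∉ Estar)
    (hcard : 4 * (Estar.card : ℤ) + 8 < ((p : ℤ) - 1) / 2) :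
    ∃ α β : ZMod (p - 1),
      ZMod.castHom
          (by obtain ⟨k, hk⟩ := hp.odd_of_ne_two hodd; omega : (2 : ℕ) ∣ p - 1)
          (ZMod 2) (α + β) = 1 ∧
      (∀ ε ∈ (↑Estar ∪ {0, 1, halfClass p} : Set (ZMod (p - 1))),
        2 * α ≠ ε ∧ 2 * α ≠ -ε ∧ 2 * β ≠ ε ∧ 2 * β ≠ -ε) ∧
      (∀ ε ∈ (↑Estar ∪ {0, 1, halfClass p} : Set (ZMod (p - 1))),
        β ≠ α + ε ∧ β ≠ α - ε ∧ β ≠ -α + ε ∧ β ≠ -α - ε) := by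
  have hp2 : 2 ≤ p := hp.two_le
  have hp3 : 3 ≤ p := by omega
  have hdvd : (2 : ℕ) ∣ p - 1 := by obtain ⟨k, hk⟩ := hp.odd_of_ne_two hodd; omega
  haveI : NeZero (p - 1) := ⟨by omega⟩
  -- translate the cardinality hypothesis to ℕ
  have hbig : 4 * Estar.card + 8 < (p - 1) / 2 := by
    obtain ⟨m, hm⟩ := hdvd
    have h1 : ((p : ℤ) - 1) = 2 * (m : ℤ) := by omega
    rw [h1, Int.mul_ediv_cancel_left _ (by norm_num)] at hcard
    have h2 : 4 * Estar.card + 8 < m := by exact_mod_cast hcard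
    omega
  set e := Estar.card with he
  set π := ZMod.castHom hdvd (ZMod 2) with hπ
  set Ebar : Finset (ZMod (p - 1)) := insert 0 (insert 1 (insert (halfClass p) Estar))
    with hEbar
  have hmem : ∀ {ε : ZMod (p - 1)},
      ε ∈ (↑Estar ∪ {0, 1, halfClass p} : Set (ZMod (p - 1))) → ε ∈ Ebar := by
    intro ε hε
    simp only [Set.mem_union, Set.mem_insert_iff, Set.mem_singleton_iff, Finset.mem_coe] at hε
    simp only [hEbar, mem_insert]
    tauto
  -- facts about halfClass
  have hhalf_add : halfClass p + halfClass p = 0 := by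
    unfold halfClass
    rw [← Nat.cast_add]
    have : (p - 1) / 2 + (p - 1) / 2 = p - 1 := by omega
    rw [this, ZMod.natCast_self]
  have hhalf_neg : -halfClass p = halfClass p := by
    rw [neg_eq_iff_add_eq_zero, hhalf_add]
  have hhalf_ne : halfClass p ≠ 0 := by
    unfold halfClass
    rw [Ne, ZMod.natCast_eq_zero_iff]
    intro hd
    have := Nat.le_of_dvd (by omega) hd
    omega
  set I : Finset (ZMod (p - 1)) := Ebar.image (fun x => -x) with hI
  set S : Finset (ZMod (p - 1)) := Ebar ∪ I with hS
  have hEbarcard : Ebar.card ≤ e + 3 := by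
    calc Ebar.card ≤ (insert 1 (insert (halfClass p) Estar)).card + 1 := card_insert_le _ _
      _ ≤ ((insert (halfClass p) Estar).card + 1) + 1 := by
          have := card_insert_le (1 : ZMod (p-1)) (insert (halfClass p) Estar); omega
      _ ≤ ((Estar.card + 1) + 1) + 1 := by
          have := card_insert_le (halfClass p) Estar; omega
      _ = e + 3 := by omega
  have h0E : (0 : ZMod (p-1)) ∈ Ebar := by simp [hEbar]
  have hhE : halfClass p ∈ Ebar := by simp [hEbar]
  have h0I : (0 : ZMod (p-1)) ∈ I := by
    rw [hI, mem_image]; exact ⟨0, h0E, by simp⟩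
  have hhI : halfClass p ∈ I := by
    rw [hI, mem_image]; exact ⟨halfClass p, hhE, hhalf_neg⟩
  have hScard : S.card ≤ 2 * e + 4 := by
    have hsub : S ⊆ Ebar ∪ (I \ {0, halfClass p}) := by
      intro x hx
      rw [hS, mem_union] at hx
      rcases hx with hx | hx
      · exact mem_union_left _ hx
      · by_cases hx2 : x ∈ ({0, halfClass p} : Finset (ZMod (p-1)))
        · apply mem_union_left
          simp only [mem_insert, mem_singleton] at hx2
          rcases hx2 with rfl | rfl
          · exact h0E
          · exact hhE
        · exact mem_union_right _ (mem_sdiff.mpr ⟨hx, hx2⟩)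
    have hpair : ({0, halfClass p} : Finset (ZMod (p-1))) ⊆ I := by
      intro x hx
      simp only [mem_insert, mem_singleton] at hx
      rcases hx with rfl | rfl
      · exact h0I
      · exact hhI
    have hpaircard : ({0, halfClass p} : Finset (ZMod (p-1))).card = 2 := by
      exact card_pair (Ne.symm hhalf_ne)
    have hIcard : I.card ≤ e + 3 := (card_image_le).trans hEbarcard
    have hI2 : 2 ≤ I.card := by
      have := card_le_card hpair
      omega
    calc S.card ≤ (Ebar ∪ (I \ {0, halfClass p})).card := card_le_card hsub
      _ ≤ Ebar.card + (I \ {0, halfClass p}).card := card_union_le _ _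
      _ = Ebar.card + (I.card - 2) := by rw [card_sdiff_of_subset hpair, hpaircard]
      _ ≤ (e + 3) + ((e + 3) - 2) := by omega
      _ ≤ 2 * e + 4 := by omega
  -- choose α with 2α ∉ S
  have hcardZ : (univ : Finset (ZMod (p - 1))).card = p - 1 := by rw [card_univ, ZMod.card]
  set BadAlpha : Finset (ZMod (p-1)) :=
    S.biUnion (fun v => univ.filter (fun x => 2 * x = v)) with hBA
  have hBAcard : BadAlpha.card ≤ 2 * S.card := by
    calc BadAlpha.card ≤ ∑ v ∈ S, (univ.filter (fun x : ZMod (p-1) => 2 * x = v)).card :=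
        card_biUnion_le
      _ ≤ ∑ _v ∈ S, 2 := Finset.sum_le_sum (fun v _ => zmod_sol_card_le hdvd v)
      _ = 2 * S.card := by rw [Finset.sum_const, smul_eq_mul, mul_comm]
  have hαex : ∃ α : ZMod (p-1), α ∉ BadAlpha := by
    have hlt : BadAlpha.card < (univ : Finset (ZMod (p-1))).card := by
      rw [hcardZ]; omega
    have : 0 < (univ \ BadAlpha).card := by
      have := le_card_sdiff BadAlpha (univ : Finset (ZMod (p-1)))
      omega
    obtain ⟨α, hα⟩ := card_pos.mp this
    exact ⟨α, (mem_sdiff.mp hα).2⟩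
  obtain ⟨α, hαgood⟩ := hαex
  have hα : ∀ v ∈ S, 2 * α ≠ v := by
    intro v hv hc
    exact hαgood (mem_biUnion.mpr ⟨v, hv, mem_filter.mpr ⟨mem_univ _, hc⟩⟩)
  -- the pool for β and the bad sets
  set Sev : Finset (ZMod (p-1)) := S.filter (fun v => π v = 0) with hSev
  set Sod : Finset (ZMod (p-1)) := S.filter (fun v => π v = 1) with hSod
  have hSsplit : Sev.card + Sod.card = S.card := by
    have h1 := card_filter_add_card_filter_not (s := S) (p := fun v => π v = 0)
    have h2 : (S.filter (fun v => ¬ π v = 0)) = Sod := by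
      rw [hSod]; apply filter_congr; intro x _
      rcases zmod2_eq01 (π x) with h | h <;> simp [h]
    rw [h2] at h1
    rw [← h1, hSev]
  set BadA : Finset (ZMod (p-1)) :=
    Sev.biUnion (fun v => univ.filter (fun x => 2 * x = v)) with hBadA
  set BadB : Finset (ZMod (p-1)) :=
    Sod.biUnion (fun d => {α + d, -α + d}) with hBadB
  have hBadAcard : BadA.card ≤ 2 * Sev.card := by
    calc BadA.card ≤ ∑ v ∈ Sev, (univ.filter (fun x : ZMod (p-1) => 2 * x = v)).card :=
        card_biUnion_le
      _ ≤ ∑ _v ∈ Sev, 2 := Finset.sum_le_sum (fun v _ => zmod_sol_card_le hdvd v)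
      _ = 2 * Sev.card := by rw [Finset.sum_const, smul_eq_mul, mul_comm]
  have hBadBcard : BadB.card ≤ 2 * Sod.card := by
    calc BadB.card ≤ ∑ d ∈ Sod, ({α + d, -α + d} : Finset (ZMod (p-1))).card :=
        card_biUnion_le
      _ ≤ ∑ _d ∈ Sod, 2 := Finset.sum_le_sum (fun d _ =>
          (card_insert_le _ _).trans (by simp))
      _ = 2 * Sod.card := by rw [Finset.sum_const, smul_eq_mul, mul_comm]
  set P : Finset (ZMod (p-1)) := univ.filter (fun x => π x = 1 - π α) with hP
  have hPcard : P.card = (p - 1) / 2 := zmod_fiber_card hdvd _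
  have hβex : ∃ β, β ∈ P ∧ β ∉ BadA ∪ BadB := by
    have hbadcard : (BadA ∪ BadB).card < P.card := by
      have h1 : (BadA ∪ BadB).card ≤ BadA.card + BadB.card := card_union_le _ _
      have h2 : BadA.card + BadB.card ≤ 2 * S.card := by omega
      rw [hPcard]; omega
    have : 0 < (P \ (BadA ∪ BadB)).card := by
      have := le_card_sdiff (BadA ∪ BadB) P
      omega
    obtain ⟨β, hβ⟩ := card_pos.mp this
    rw [mem_sdiff] at hβ
    exact ⟨β, hβ.1, hβ.2⟩
  obtain ⟨β, hβP, hβbad⟩ := hβex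
  have hβπ : π β = 1 - π α := (mem_filter.mp hβP).2
  have hβπ' : π β + π α = 1 := by rw [hβπ]; ring
  have hβA : β ∉ BadA := fun h => hβbad (mem_union_left _ h)
  have hβB : β ∉ BadB := fun h => hβbad (mem_union_right _ h)
  -- key facts
  have hkeyA : ∀ v ∈ S, 2 * β ≠ v := by
    intro v hv hc
    have hπv : π v = 0 := by
      rw [← hc, two_mul, map_add]; exact zmod2_add_self _
    exact hβA (mem_biUnion.mpr ⟨v, mem_filter.mpr ⟨hv, hπv⟩,
      mem_filter.mpr ⟨mem_univ _, hc⟩⟩)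
  have hkeyB : ∀ d ∈ S, β ≠ α + d ∧ β ≠ -α + d := by
    intro d hd
    constructor
    · intro hc
      have hπd : π d = 1 := by
        apply zmod2_aux1 (π α) (π β) (π d) hβπ'
        rw [hc, map_add]
      refine hβB (mem_biUnion.mpr ⟨d, mem_filter.mpr ⟨hd, hπd⟩, ?_⟩)
      simp [hc]
    · intro hc
      have hπd : π d = 1 := by
        apply zmod2_aux2 (π α) (π β) (π d) hβπ'
        rw [hc, map_add, map_neg]
      refine hβB (mem_biUnion.mpr ⟨d, mem_filter.mpr ⟨hd, hπd⟩, ?_⟩)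
      simp [hc]
  have hmemS : ∀ {ε : ZMod (p-1)}, ε ∈ Ebar → ε ∈ S ∧ -ε ∈ S := by
    intro ε hε
    refine ⟨mem_union_left _ hε, mem_union_right _ ?_⟩
    rw [hI, mem_image]
    exact ⟨ε, hε, rfl⟩
  refine ⟨α, β, ?_, ?_, ?_⟩
  · show π (α + β) = 1
    rw [map_add, add_comm]
    exact hβπ'
  · intro ε hε
    obtain ⟨hεS, hεnS⟩ := hmemS (hmem hε)
    exact ⟨hα ε hεS, hα (-ε) hεnS, hkeyA ε hεS, hkeyA (-ε) hεnS⟩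
  · intro ε hε
    obtain ⟨hεS, hεnS⟩ := hmemS (hmem hε)
    refine ⟨(hkeyB ε hεS).1, ?_, (hkeyB ε hεS).2, ?_⟩
    · rw [sub_eq_add_neg]; exact (hkeyB (-ε) hεnS).1
    · have := (hkeyB (-ε) hεnS).2
      intro hc; apply this; rw [hc]; ring
end
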